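/- There exists a constant C > 0 such that for every t > 0 and every a ∈ ℝ: ∫_ℝ |v|^{−1/2} e^{−8t(v − a)²} dv ≤ C t^{−1/4}. -/
import Mathlib

open MeasureTheory Real
open scoped ENNReal

private lemma rpow_half_neg_nonneg (v : ℝ) : 0 ≤ v ^ (-(1:ℝ)/2) := by
  rcases le_or_gt 0 v with hv | hv
  · exact Real.rpow_nonneg hv _
  · rw [Real.rpow_def_of_neg hv, show -(1:ℝ)/2 * π = -(π/2) by ring, Real.cos_neg,
      Real.cos_pi_div_two, mul_zero]

private lemma abs_rpow_split (v : ℝ) :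
    |v| ^ (-(1:ℝ)/2) = v ^ (-(1:ℝ)/2) + (-v) ^ (-(1:ℝ)/2) := by
  rcases lt_trichotomy v 0 with hv | hv | hv
  · rw [abs_of_neg hv, Real.rpow_def_of_neg hv,
      show -(1:ℝ)/2 * π = -(π/2) by ring, Real.cos_neg, Real.cos_pi_div_two]
    ring
  · simp [hv, Real.zero_rpow (by norm_num : -(1:ℝ)/2 ≠ 0)]
  · rw [abs_of_pos hv, Real.rpow_def_of_neg (by linarith : -v < 0),
      show -(1:ℝ)/2 * π = -(π/2) by ring, Real.cos_neg, Real.cos_pi_div_two]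
    ring

theorem statement19 :
    ∃ C : ℝ, 0 < C ∧
      ∀ (t : ℝ), 0 < t → ∀ a : ℝ,
        ∫⁻ (v : ℝ),
            ENNReal.ofReal (|v| ^ (-(1 : ℝ) / 2) * Real.exp (-8 * t * (v - a) ^ 2)) ≤
          ENNReal.ofReal (C * t ^ (-(1 : ℝ) / 4)) := by
  refine ⟨5, by norm_num, fun t ht a => ?_⟩
  set R : ℝ := t ^ (-(1:ℝ)/2) with hRdef
  have hRpos : 0 < R := Real.rpow_pos_of_pos ht _
  have hRhalf : R ^ ((1:ℝ)/2) = t ^ (-(1:ℝ)/4) := by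
    rw [hRdef, ← Real.rpow_mul ht.le]; norm_num
  have hRinv : R ^ (-(1:ℝ)/2) = t ^ ((1:ℝ)/4) := by
    rw [hRdef, ← Real.rpow_mul ht.le]; norm_num
  have htq : 0 ≤ t ^ ((1:ℝ)/4) := (Real.rpow_pos_of_pos ht _).le
  set g : ℝ → ℝ≥0∞ := (Set.Icc (-R) R).indicator
      (fun v => ENNReal.ofReal (v ^ (-(1:ℝ)/2)) + ENNReal.ofReal ((-v) ^ (-(1:ℝ)/2))) with hgdef
  set h : ℝ → ℝ≥0∞ :=
      fun v => ENNReal.ofReal (t ^ ((1:ℝ)/4) * Real.exp (-8 * t * (v - a) ^ 2)) with hhdef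
  have hmeas1 : Measurable fun v : ℝ => ENNReal.ofReal (v ^ (-(1:ℝ)/2)) :=
    ENNReal.measurable_ofReal.comp (measurable_id.pow measurable_const)
  have hmeas2 : Measurable fun v : ℝ => ENNReal.ofReal ((-v) ^ (-(1:ℝ)/2)) :=
    ENNReal.measurable_ofReal.comp (measurable_neg.pow measurable_const)
  have hgmeas : Measurable g := (hmeas1.add hmeas2).indicator measurableSet_Icc
  -- pointwise bound
  have hpt : ∀ v : ℝ,
      ENNReal.ofReal (|v| ^ (-(1:ℝ)/2) * Real.exp (-8 * t * (v - a) ^ 2)) ≤ g v + h v := by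
    intro v
    by_cases hv : |v| ≤ R
    · have hmem : v ∈ Set.Icc (-R) R := abs_le.mp hv
      have h1 : ENNReal.ofReal (|v| ^ (-(1:ℝ)/2) * Real.exp (-8 * t * (v - a) ^ 2)) ≤
          ENNReal.ofReal (|v| ^ (-(1:ℝ)/2)) := by
        apply ENNReal.ofReal_le_ofReal
        calc |v| ^ (-(1:ℝ)/2) * Real.exp (-8 * t * (v - a) ^ 2)
            ≤ |v| ^ (-(1:ℝ)/2) * 1 := by
              apply mul_le_mul_of_nonneg_left _ (Real.rpow_nonneg (abs_nonneg v) _)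
              exact Real.exp_le_one_iff.mpr (by nlinarith [sq_nonneg (v - a)])
          _ = |v| ^ (-(1:ℝ)/2) := mul_one _
      refine h1.trans (le_trans ?_ le_self_add)
      rw [hgdef, Set.indicator_of_mem hmem, abs_rpow_split v,
        ENNReal.ofReal_add (rpow_half_neg_nonneg v) (rpow_half_neg_nonneg (-v))]
    · push_neg at hv
      refine le_trans ?_ le_add_self
      rw [hhdef]
      apply ENNReal.ofReal_le_ofReal
      apply mul_le_mul_of_nonneg_right _ (Real.exp_nonneg _)
      rw [← hRinv]
      exact Real.rpow_le_rpow_of_nonpos hRpos hv.le (by norm_num)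
  -- integral of g
  have hintg : ∫⁻ v, g v ≤ ENNReal.ofReal (4 * t ^ (-(1:ℝ)/4)) := by
    have hII : IntervalIntegrable (fun v : ℝ => v ^ (-(1:ℝ)/2)) volume (-R) R := by
      have := intervalIntegral.intervalIntegrable_rpow' (a := -R) (b := R) (r := -(1:ℝ)/2) (by norm_num)
      simpa using this
    have hint1 : IntegrableOn (fun v : ℝ => v ^ (-(1:ℝ)/2)) (Set.Icc (-R) R) := by
      rw [integrableOn_Icc_iff_integrableOn_Ioc]
      exact hII.1
    have hval : ∫ v in Set.Icc (-R) R, v ^ (-(1:ℝ)/2) = 2 * t ^ (-(1:ℝ)/4) := by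
      rw [integral_Icc_eq_integral_Ioc,
        ← intervalIntegral.integral_of_le (by linarith : -R ≤ R),
        integral_rpow (Or.inl (by norm_num))]
      have hnegR : (-R) ^ (-(1:ℝ)/2 + 1) = 0 := by
        rw [Real.rpow_def_of_neg (by linarith : -R < 0),
          show (-(1:ℝ)/2 + 1) * π = π/2 by ring, Real.cos_pi_div_two, mul_zero]
      rw [hnegR, show -(1:ℝ)/2 + 1 = (1:ℝ)/2 by norm_num, hRhalf]
      ring
    have hlin1 : ∫⁻ v in Set.Icc (-R) R, ENNReal.ofReal (v ^ (-(1:ℝ)/2)) =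
        ENNReal.ofReal (2 * t ^ (-(1:ℝ)/4)) := by
      rw [← ofReal_integral_eq_lintegral_ofReal hint1
        (Filter.Eventually.of_forall fun v => rpow_half_neg_nonneg v), hval]
    have hlin2 : ∫⁻ v in Set.Icc (-R) R, ENNReal.ofReal ((-v) ^ (-(1:ℝ)/2)) =
        ENNReal.ofReal (2 * t ^ (-(1:ℝ)/4)) := by
      have hmp : MeasurePreserving (fun v : ℝ => -v) volume volume :=
        Measure.measurePreserving_neg _
      have hemb : MeasurableEmbedding (fun v : ℝ => -v) :=
        (Homeomorph.neg ℝ).measurableEmbedding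
      have hpre : (fun v : ℝ => -v) ⁻¹' (Set.Icc (-R) R) = Set.Icc (-R) R := by
        ext x; simp [neg_le, le_neg, and_comm]
      calc ∫⁻ v in Set.Icc (-R) R, ENNReal.ofReal ((-v) ^ (-(1:ℝ)/2))
          = ∫⁻ v in (fun v : ℝ => -v) ⁻¹' (Set.Icc (-R) R),
              ENNReal.ofReal ((-v) ^ (-(1:ℝ)/2)) := by rw [hpre]
        _ = ∫⁻ v in Set.Icc (-R) R, ENNReal.ofReal (v ^ (-(1:ℝ)/2)) :=
            hmp.setLIntegral_comp_preimage_emb hemb (fun v => ENNReal.ofReal (v ^ (-(1:ℝ)/2))) (Set.Icc (-R) R)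
        _ = ENNReal.ofReal (2 * t ^ (-(1:ℝ)/4)) := hlin1
    rw [hgdef, lintegral_indicator measurableSet_Icc,
      lintegral_add_left hmeas1, hlin1, hlin2,
      ← ENNReal.ofReal_add (by positivity) (by positivity)]
    exact ENNReal.ofReal_le_ofReal (by linarith)
  have hG : ∫⁻ v, h v ≤ ENNReal.ofReal (t ^ (-(1:ℝ)/4)) := by
    have hb : (0:ℝ) < 8 * t := by linarith
    have hexp : ∀ v : ℝ, -8 * t * (v - a)^2 = -(8*t) * (v - a)^2 := fun v => by ring
    have hinteg : Integrable (fun v : ℝ => Real.exp (-(8*t) * v ^ 2)) :=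
      integrable_exp_neg_mul_sq hb
    have h1 : ∫⁻ v : ℝ, ENNReal.ofReal (Real.exp (-(8*t) * (v - a) ^ 2)) =
        ∫⁻ v : ℝ, ENNReal.ofReal (Real.exp (-(8*t) * v ^ 2)) := by
      simp_rw [sub_eq_add_neg]
      exact lintegral_add_right_eq_self
        (fun v => ENNReal.ofReal (Real.exp (-(8*t) * v ^ 2))) (-a)
    have h2 : ∫⁻ v : ℝ, ENNReal.ofReal (Real.exp (-(8*t) * v ^ 2)) =
        ENNReal.ofReal (Real.sqrt (π / (8*t))) := by
      rw [← ofReal_integral_eq_lintegral_ofReal hinteg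
        (Filter.Eventually.of_forall fun v => (Real.exp_nonneg _)), integral_gaussian]
    have hsq : Real.sqrt (π / (8*t)) ≤ t ^ (-(1:ℝ)/2) := by
      have h3 : π / (8*t) ≤ 1/t := by
        rw [div_le_div_iff₀ (by linarith) ht]
        nlinarith [Real.pi_le_four]
      calc Real.sqrt (π / (8*t)) ≤ Real.sqrt (1/t) := Real.sqrt_le_sqrt h3
        _ = t ^ (-(1:ℝ)/2) := by
            rw [one_div, ← Real.rpow_neg_one t, Real.sqrt_eq_rpow, ← Real.rpow_mul ht.le]
            norm_num
    calc ∫⁻ v, h v = ENNReal.ofReal (t ^ ((1:ℝ)/4)) *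
          ∫⁻ v : ℝ, ENNReal.ofReal (Real.exp (-(8*t) * (v - a) ^ 2)) := by
          rw [hhdef]
          simp_rw [hexp, ENNReal.ofReal_mul htq]
          rw [lintegral_const_mul' _ _ ENNReal.ofReal_ne_top]
      _ = ENNReal.ofReal (t ^ ((1:ℝ)/4)) * ENNReal.ofReal (Real.sqrt (π / (8*t))) := by
          rw [h1, h2]
      _ ≤ ENNReal.ofReal (t ^ ((1:ℝ)/4)) * ENNReal.ofReal (t ^ (-(1:ℝ)/2)) :=
          mul_le_mul_right (ENNReal.ofReal_le_ofReal hsq) _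
      _ = ENNReal.ofReal (t ^ ((1:ℝ)/4) * t ^ (-(1:ℝ)/2)) := (ENNReal.ofReal_mul htq).symm
      _ = ENNReal.ofReal (t ^ (-(1:ℝ)/4)) := by
          rw [← Real.rpow_add ht]; norm_num
  refine le_trans (lintegral_mono hpt) ?_
  calc ∫⁻ v, (g v + h v) = (∫⁻ v, g v) + ∫⁻ v, h v := lintegral_add_left hgmeas _
    _ ≤ ENNReal.ofReal (4 * t ^ (-(1:ℝ)/4)) + ENNReal.ofReal (t ^ (-(1:ℝ)/4)) :=
        add_le_add hintg hG
    _ ≤ ENNReal.ofReal (5 * t ^ (-(1:ℝ)/4)) := by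
        rw [← ENNReal.ofReal_add (by positivity) (by positivity)]
        exact ENNReal.ofReal_le_ofReal (by linarith)
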